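/- Suppose a sequence of nonnegative reals (aᵏ) satisfies a^{k+1} ≤ (1 − 2/(k+1)) aᵏ + c/(k+1)^{4/3} for all k ≥ 0, where c ≥ 0. Then for all K ≥ 1, a^K ≤ Γ^K · c · ∑_{k=0}^{K−1} (k+1)^{2/3} ≤ c/K^{1/3}, where Γ^K = 2/(K(K+1)). -/

import Mathlib

theorem convex_recursion_rate (a : ℕ → ℝ) (ha : ∀ k, 0 ≤ a k) (c : ℝ) (hc : 0 ≤ c)
    (hrec : ∀ k : ℕ, a (k+1) ≤ (1 - 2 / ((k : ℝ) + 1)) * a k + c / ((k : ℝ) + 1) ^ ((4:ℝ)/3))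
    (K : ℕ) (hK : 1 ≤ K) :
    a K ≤ (2 / ((K : ℝ) * ((K : ℝ) + 1))) * c *
        ∑ k ∈ Finset.range K, ((k : ℝ) + 1) ^ ((2:ℝ)/3) ∧
    (2 / ((K : ℝ) * ((K : ℝ) + 1))) * c *
        ∑ k ∈ Finset.range K, ((k : ℝ) + 1) ^ ((2:ℝ)/3) ≤ 2 * c / (K : ℝ) ^ ((1:ℝ)/3) := by
  have hS : ∀ K : ℕ, 0 ≤ ∑ k ∈ Finset.range K, ((k : ℝ) + 1) ^ ((2:ℝ)/3) := by
    intro K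
    apply Finset.sum_nonneg
    intro i _
    positivity
  constructor
  · induction K, hK using Nat.le_induction with
    | base =>
      have h0 := hrec 0
      simp only [Nat.cast_zero] at h0
      norm_num at h0 ⊢
      linarith [ha 0]
    | succ K hK1 IH =>
      set x : ℝ := (K : ℝ) with hx
      have hx1 : (1:ℝ) ≤ x := by rw [hx]; exact_mod_cast hK1
      have hx0 : (0:ℝ) < x := by linarith
      set q : ℝ := (x + 1) ^ ((2:ℝ)/3) with hqdef
      have hq0 : 0 < q := Real.rpow_pos_of_pos (by linarith) _
      have hq3 : q ^ 3 = (x + 1) ^ 2 := by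
        rw [hqdef, ← Real.rpow_natCast ((x+1) ^ ((2:ℝ)/3)) 3, ← Real.rpow_mul (by linarith)]
        norm_num
      have hrecK := hrec K
      have h43 : ((K : ℝ) + 1) ^ ((4:ℝ)/3) = q ^ 2 := by
        rw [hqdef, ← Real.rpow_natCast ((x+1) ^ ((2:ℝ)/3)) 2, ← Real.rpow_mul (by linarith)]
        norm_num
        rfl
      rw [h43] at hrecK
      set S : ℝ := ∑ k ∈ Finset.range K, ((k : ℝ) + 1) ^ ((2:ℝ)/3) with hSdef
      have hS0 : 0 ≤ S := hS K
      have hsum : ∑ k ∈ Finset.range (K+1), ((k : ℝ) + 1) ^ ((2:ℝ)/3) = S + q := by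
        rw [Finset.sum_range_succ]
      rw [hsum]
      push_cast
      have hcoef : 0 ≤ 1 - 2 / (x + 1) := by
        rw [sub_nonneg, div_le_one (by linarith)]
        linarith
      have step1 : a (K+1) ≤ (1 - 2/(x+1)) * (2 / (x * (x+1)) * c * S) + c / q ^ 2 := by
        calc a (K+1) ≤ (1 - 2/(x+1)) * a K + c / q ^ 2 := hrecK
        _ ≤ (1 - 2/(x+1)) * (2 / (x * (x+1)) * c * S) + c / q ^ 2 := by
            have := mul_le_mul_of_nonneg_left IH hcoef
            linarith
      refine step1.trans ?_
      have heq : (1 - 2/(x+1)) * (2 / (x * (x+1)) * c * S) + c / q ^ 2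
          = (2 * c * S * (x - 1) * q ^ 2 + c * x * (x + 1) ^ 2) / (x * (x+1)^2 * q^2) := by
        field_simp
        ring
      have heq2 : 2 / ((x + 1) * (x + 1 + 1)) * c * (S + q)
          = (2 * c * (S + q)) / ((x+1) * (x+2)) := by ring_nf
      rw [heq, heq2, div_le_div_iff₀ (by positivity) (by positivity)]
      have hexp : 2*c*(S+q)*(x*(x+1)^2*q^2)
          = 2*c*S*x*(x+1)^2*q^2 + 2*c*x*(x+1)^2*(q^3) := by ring
      rw [hq3] at hexp
      rw [hexp]
      nlinarith [mul_nonneg (mul_nonneg (mul_nonneg hc hS0) (sq_nonneg q)) (by linarith : (0:ℝ) ≤ x + 1),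
        mul_nonneg (mul_nonneg (mul_nonneg hc (mul_pos hx0 hx0).le) (by linarith : (0:ℝ) ≤ x + 1)) (pow_nonneg (by linarith : (0:ℝ) ≤ x+1) 3)]
  · set x : ℝ := (K : ℝ) with hx
    have hx1 : (1:ℝ) ≤ x := by rw [hx]; exact_mod_cast hK
    have hx0 : (0:ℝ) < x := by linarith
    have hbound : ∑ k ∈ Finset.range K, ((k : ℝ) + 1) ^ ((2:ℝ)/3) ≤ x * x ^ ((2:ℝ)/3) := by
      calc ∑ k ∈ Finset.range K, ((k : ℝ) + 1) ^ ((2:ℝ)/3)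
          ≤ ∑ k ∈ Finset.range K, x ^ ((2:ℝ)/3) := by
            apply Finset.sum_le_sum
            intro i hi
            apply Real.rpow_le_rpow (by positivity) _ (by norm_num)
            have h1 : i + 1 ≤ K := Finset.mem_range.mp hi
            rw [hx]
            exact_mod_cast h1
        _ = x * x ^ ((2:ℝ)/3) := by
            rw [Finset.sum_const, Finset.card_range, nsmul_eq_mul]
    have huv : x ^ ((2:ℝ)/3) * x ^ ((1:ℝ)/3) = x := by
      rw [← Real.rpow_add hx0]
      norm_num
    have hu0 : 0 < x ^ ((2:ℝ)/3) := Real.rpow_pos_of_pos hx0 _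
    have hv0 : 0 < x ^ ((1:ℝ)/3) := Real.rpow_pos_of_pos hx0 _
    calc 2 / (x * (x + 1)) * c * ∑ k ∈ Finset.range K, ((k : ℝ) + 1) ^ ((2:ℝ)/3)
        ≤ 2 / (x * (x + 1)) * c * (x * x ^ ((2:ℝ)/3)) := by
          apply mul_le_mul_of_nonneg_left hbound (by positivity)
      _ ≤ 2 * c / x ^ ((1:ℝ)/3) := by
          rw [div_mul_eq_mul_div, div_mul_eq_mul_div, div_le_div_iff₀ (by positivity) hv0]
          have e : 2 * c * (x * x ^ ((2:ℝ)/3)) * x ^ ((1:ℝ)/3) = 2 * c * x * x := by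
            rw [show 2 * c * (x * x ^ ((2:ℝ)/3)) * x ^ ((1:ℝ)/3)
                = 2 * c * x * (x ^ ((2:ℝ)/3) * x ^ ((1:ℝ)/3)) from by ring, huv]
          nlinarith [mul_nonneg hc hx0.le]
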